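/- The connection formula J_n^μ(x) = (n!/[n]_μ!) Σ_{k≥0} (μ)_k / (k! (⌊(n+1)/2⌋ + μ + 1/2)_k) (x/2)^k J_{n+k}(x) holds, relating the deformed Bessel functions to the classical ones. -/

import Mathlib

/-- The deformed integer `[n]_μ = n + μ (1 - (-1)^n)`. -/
noncomputable def dIdx (μ : ℝ) (n : ℕ) : ℝ := n + μ * (1 - (-1 : ℝ) ^ n)

/-- The deformed factorial `[n]_μ!`. -/
noncomputable def dFact (μ : ℝ) : ℕ → ℝ
  | 0 => 1
  | n + 1 => dIdx μ (n + 1) * dFact μ n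

/-- The Pochhammer symbol `(a)_k = a(a+1)⋯(a+k-1)`. -/
noncomputable def poch (a : ℝ) (k : ℕ) : ℝ := ∏ i ∈ Finset.range k, (a + i)

/-- The classical Bessel function of integer order `n ≥ 0`. -/
noncomputable def besselJ (n : ℕ) (x : ℝ) : ℝ :=
  ∑' k : ℕ, (-1 : ℝ) ^ k / ((Nat.factorial k) * (Nat.factorial (k + n))) * (x / 2) ^ (2 * k + n)

/-- The deformed Bessel function `J_n^μ`. -/
noncomputable def Jmu (μ : ℝ) (n : ℕ) (x : ℝ) : ℝ :=
  ∑' k : ℕ, (-1 : ℝ) ^ k * (Nat.factorial (2 * k + n)) /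
      ((Nat.factorial k) * (Nat.factorial (k + n)) * dFact μ (2 * k + n)) *
    (x / 2) ^ (2 * k + n)

lemma poch_zero (a : ℝ) : poch a 0 = 1 := by simp [poch]

lemma poch_succ (a : ℝ) (k : ℕ) : poch a (k + 1) = poch a k * (a + k) :=
  Finset.prod_range_succ _ _

lemma poch_succ_left (a : ℝ) (k : ℕ) : poch a (k + 1) = a * poch (a + 1) k := by
  rw [poch, Finset.prod_range_succ', mul_comm]
  congr 1
  · push_cast; ring
  · exact Finset.prod_congr rfl fun i _ => by push_cast; ring

lemma poch_add (a : ℝ) (i j : ℕ) : poch a (i + j) = poch a i * poch (a + i) j := by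
  rw [poch, Finset.prod_range_add]
  congr 1
  exact Finset.prod_congr rfl fun x _ => by push_cast; ring

lemma poch_pos {a : ℝ} (ha : 0 < a) (k : ℕ) : 0 < poch a k :=
  Finset.prod_pos fun i _ => by positivity

lemma poch_nonneg {a : ℝ} (ha : 0 ≤ a) (k : ℕ) : 0 ≤ poch a k :=
  Finset.prod_nonneg fun i _ => by positivity

lemma poch_le {a c : ℝ} (ha : 0 ≤ a) (h : a ≤ c) (k : ℕ) : poch a k ≤ poch c k :=
  Finset.prod_le_prod (fun i _ => by positivity) (fun i _ => by linarith)

lemma dIdx_pos {μ : ℝ} (hμ : 0 ≤ μ) {m : ℕ} (hm : 0 < m) : 0 < dIdx μ m := by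
  unfold dIdx
  have hm' : (0 : ℝ) < m := by exact_mod_cast hm
  rcases Nat.even_or_odd m with h | h
  · rw [h.neg_one_pow]; simpa using hm'
  · rw [h.neg_one_pow]; nlinarith

lemma dFact_pos {μ : ℝ} (hμ : 0 ≤ μ) : ∀ m, 0 < dFact μ m
  | 0 => one_pos
  | m + 1 => mul_pos (dIdx_pos hμ m.succ_pos) (dFact_pos hμ m)

/-- Chu–Vandermonde in polynomial form. -/
lemma vandermonde (x : ℝ) : ∀ (m : ℕ) (y : ℝ),
    ∑ k ∈ Finset.range (m + 1),
      ((-1 : ℝ) ^ k * (m.choose k) * poch x k * poch (x + y + k) (m - k)) = poch y m := by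
  intro m
  induction m with
  | zero => intro y; simp [poch]
  | succ m ih =>
    intro y
    have h1 : ∀ i ∈ Finset.range (m + 1),
        ((-1 : ℝ) ^ (i+1) * ((m+1).choose (i+1)) * poch x (i+1) * poch (x + y + ↑(i+1)) (m + 1 - (i+1)))
        = ((-1 : ℝ) ^ (i+1) * (m.choose (i+1)) * poch x (i+1) * poch (x + y + ↑(i+1)) (m + 1 - (i+1)))
          + ((-1 : ℝ) ^ (i+1) * (m.choose i) * poch x (i+1) * poch (x + y + ↑(i+1)) (m - i)) := by
      intro i hi
      rw [Nat.choose_succ_succ, Nat.succ_sub_succ]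
      push_cast
      ring
    rw [Finset.sum_range_succ', Finset.sum_congr rfl h1, Finset.sum_add_distrib]
    have h2 : (∑ i ∈ Finset.range (m + 1),
        ((-1 : ℝ) ^ (i+1) * (m.choose (i+1)) * poch x (i+1) * poch (x + y + ↑(i+1)) (m + 1 - (i+1))))
        + ((-1 : ℝ) ^ (0:ℕ) * ((m.choose 0 : ℕ) : ℝ) * poch x 0 * poch (x + y + ((0:ℕ):ℝ)) (m + 1 - 0))
        = ∑ k ∈ Finset.range (m + 1),
            ((-1 : ℝ) ^ k * (m.choose k) * poch x k * poch (x + y + k) (m + 1 - k)) := by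
      rw [← Finset.sum_range_succ' (fun k => ((-1 : ℝ) ^ k * (m.choose k) * poch x k * poch (x + y + (k:ℝ)) (m + 1 - k))) (m+1),
        Finset.sum_range_succ]
      simp [Nat.choose_succ_self]
    have hf0 : ((-1 : ℝ) ^ (0:ℕ) * (((m+1).choose 0 : ℕ) : ℝ) * poch x 0 * poch (x + y + ((0:ℕ):ℝ)) (m + 1 - 0))
        = ((-1 : ℝ) ^ (0:ℕ) * ((m.choose 0 : ℕ) : ℝ) * poch x 0 * poch (x + y + ((0:ℕ):ℝ)) (m + 1 - 0)) := by
      norm_num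
    rw [add_right_comm, hf0, h2, ← Finset.sum_add_distrib]
    have h3 : ∀ k ∈ Finset.range (m + 1),
        ((-1 : ℝ) ^ k * (m.choose k) * poch x k * poch (x + y + k) (m + 1 - k))
          + ((-1 : ℝ) ^ (k+1) * (m.choose k) * poch x (k+1) * poch (x + y + ↑(k+1)) (m - k))
        = y * ((-1 : ℝ) ^ k * (m.choose k) * poch x k * poch (x + (y+1) + k) (m - k)) := by
      intro k hk
      have hk' : k ≤ m := Nat.lt_succ_iff.mp (Finset.mem_range.mp hk)
      have e1 : m + 1 - k = (m - k) + 1 := by omega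
      have e2 : x + y + ((k:ℝ)+1) = (x + y + k) + 1 := by ring
      have e3 : x + (y+1) + (k:ℝ) = (x + y + k) + 1 := by ring
      rw [e1, poch_succ_left (x + y + k), poch_succ x k]
      push_cast
      rw [e2, e3]
      ring
    rw [Finset.sum_congr rfl h3, ← Finset.mul_sum, ih (y+1), ← poch_succ_left]

/-- Product identity for the deformed factorial. -/
lemma dFact_ratio (μ : ℝ) (n : ℕ) : ∀ s : ℕ,
    dFact μ (2 * s + n) * (n.factorial : ℝ) * poch ((((n+1)/2 : ℕ) : ℝ) + 1/2) s
      = dFact μ n * (((2 * s + n).factorial : ℝ)) * poch ((((n+1)/2 : ℕ) : ℝ) + μ + 1/2) s := by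
  intro s
  induction s with
  | zero => simp [poch_zero]
  | succ s ih =>
    have e : 2 * (s + 1) + n = ((2 * s + n) + 1) + 1 := by ring
    rw [e]
    show dIdx μ (2*s+n+1+1) * (dIdx μ (2*s+n+1) * dFact μ (2*s+n)) * (n.factorial : ℝ) * _ = _
    rw [Nat.factorial_succ, Nat.factorial_succ, poch_succ, poch_succ]
    have hstep : dIdx μ (2*s+n+1) * dIdx μ (2*s+n+1+1) * ((((n+1)/2 : ℕ) : ℝ) + 1/2 + s)
        = (((2*s+n+1 : ℕ) : ℝ)) * (((2*s+n+1+1 : ℕ) : ℝ)) * ((((n+1)/2 : ℕ) : ℝ) + μ + 1/2 + s) := by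
      rcases Nat.even_or_odd n with ⟨a, rfl⟩ | ⟨a, rfl⟩
      · have hd : ((a + a + 1) / 2 : ℕ) = a := by omega
        have e1 : ((-1 : ℝ)) ^ (2*s+(a+a)+1) = -1 := Odd.neg_one_pow ⟨s+a, by ring⟩
        have e2 : ((-1 : ℝ)) ^ (2*s+(a+a)+1+1) = 1 := Even.neg_one_pow ⟨s+a+1, by ring⟩
        unfold dIdx
        rw [hd, e1, e2]
        push_cast
        ring
      · have hd : ((2*a + 1 + 1) / 2 : ℕ) = a + 1 := by omega
        have e1 : ((-1 : ℝ)) ^ (2*s+(2*a+1)+1) = 1 := Even.neg_one_pow ⟨s+a+1, by ring⟩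
        have e2 : ((-1 : ℝ)) ^ (2*s+(2*a+1)+1+1) = -1 := Odd.neg_one_pow ⟨s+a+1, by ring⟩
        unfold dIdx
        rw [hd, e1, e2]
        push_cast
        ring
    push_cast at ih hstep ⊢
    linear_combination (dIdx μ (2*s+n+1) * dIdx μ (2*s+n+1+1) * ((((n+1)/2 : ℕ) : ℝ) + 1/2 + s)) * ih
      + (dFact μ n * (((2*s+n).factorial : ℕ) : ℝ) * poch ((((n+1)/2 : ℕ) : ℝ) + μ + 1/2) s) * hstep

lemma aux_summable (μ B x : ℝ) (hμ : 0 ≤ μ) (hB : 0 < B) (hμB : μ ≤ B) (n : ℕ) :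
    Summable (fun p : ℕ × ℕ =>
      poch μ p.1 / ((p.1.factorial : ℝ) * poch B p.1) *
        ((-1 : ℝ) ^ p.2 / ((p.2.factorial : ℝ) * ((p.2 + (n + p.1)).factorial : ℝ))) *
        (x / 2) ^ (p.1 + (2 * p.2 + (n + p.1)))) := by
  have hG : Summable (fun p : ℕ × ℕ => (((x/2)^2) ^ p.1 / (p.1.factorial : ℝ)) *
      (|x/2| ^ n * (((x/2)^2) ^ p.2 / (p.2.factorial : ℝ)))) :=
    Summable.mul_of_nonneg (f := fun k : ℕ => ((x/2)^2) ^ k / (k.factorial : ℝ))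
      (g := fun j : ℕ => |x/2| ^ n * (((x/2)^2) ^ j / (j.factorial : ℝ)))
      (Real.summable_pow_div_factorial _)
      ((Real.summable_pow_div_factorial ((x/2)^2)).mul_left (|x/2| ^ n))
      (fun k => by positivity) (fun j => by positivity)
  apply Summable.of_norm_bounded hG
  rintro ⟨k, j⟩
  have e2 : 0 < poch B k := poch_pos hB k
  have hT1n : 0 ≤ poch μ k / ((k.factorial : ℝ) * poch B k) :=
    div_nonneg (poch_nonneg hμ k) (by positivity)
  have hT1 : poch μ k / ((k.factorial : ℝ) * poch B k) ≤ 1 / (k.factorial : ℝ) := by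
    rw [div_le_div_iff₀ (by positivity) (by positivity)]
    have h1 : poch μ k ≤ poch B k := poch_le hμ hμB k
    have h2 : (0:ℝ) < (k.factorial : ℝ) := by positivity
    nlinarith
  have hT2 : |(-1 : ℝ) ^ j / ((j.factorial : ℝ) * ((j + (n + k)).factorial : ℝ))|
      ≤ 1 / (j.factorial : ℝ) := by
    rw [abs_div, abs_pow, abs_neg, abs_one, one_pow, abs_of_pos (by positivity)]
    apply one_div_le_one_div_of_le (by positivity)
    have h3 : (1:ℝ) ≤ ((j + (n + k)).factorial : ℝ) := by
      exact_mod_cast (j + (n + k)).factorial_pos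
    nlinarith [show (0:ℝ) < (j.factorial : ℝ) by positivity]
  have hT3 : |x/2| ^ (k + (2 * j + (n + k)))
      = ((x/2)^2) ^ k * (((x/2)^2) ^ j * |x/2| ^ n) := by
    rw [← sq_abs (x/2), ← pow_mul, ← pow_mul, ← pow_add, ← pow_add]
    congr 1
    omega
  simp only [Real.norm_eq_abs, abs_mul, abs_of_nonneg hT1n, abs_pow]
  rw [hT3]
  calc poch μ k / ((k.factorial : ℝ) * poch B k) *
        |(-1 : ℝ) ^ j / ((j.factorial : ℝ) * ((j + (n + k)).factorial : ℝ))| *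
        (((x/2)^2) ^ k * (((x/2)^2) ^ j * |x/2| ^ n))
      ≤ (1 / (k.factorial : ℝ)) * (1 / (j.factorial : ℝ)) *
        (((x/2)^2) ^ k * (((x/2)^2) ^ j * |x/2| ^ n)) := by
        apply mul_le_mul_of_nonneg_right (mul_le_mul hT1 hT2 (abs_nonneg _) (by positivity))
        positivity
    _ = ((x/2)^2) ^ k / (k.factorial : ℝ) *
        (|x/2| ^ n * (((x/2)^2) ^ j / (j.factorial : ℝ))) := by ring

lemma tsum_nat_prod_eq_antidiagonal {F : ℕ × ℕ → ℝ} (h : Summable F) :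
    ∑' p : ℕ × ℕ, F p = ∑' s : ℕ, ∑ kl ∈ Finset.HasAntidiagonal.antidiagonal s, F kl := by
  conv_rhs => congr; ext; rw [← Finset.sum_finset_coe, ← tsum_fintype (L := SummationFilter.unconditional _)]
  rw [← Finset.HasAntidiagonal.sigmaAntidiagonalEquivProd.tsum_eq F]
  exact Summable.tsum_sigma' (fun s => (hasSum_fintype _).summable)
    (Finset.HasAntidiagonal.sigmaAntidiagonalEquivProd.summable_iff.mpr h)

/-- The connection formula relating `J_n^μ` to the classical Bessel functions. -/
theorem Jmu_connection (μ : ℝ) (hμ : 0 ≤ μ) (n : ℕ) (x : ℝ) :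
    Jmu μ n x = ((Nat.factorial n : ℝ) / dFact μ n) *
      ∑' k : ℕ, poch μ k / ((Nat.factorial k) * poch (((n + 1) / 2 : ℕ) + μ + 1 / 2) k) *
        (x / 2) ^ k * besselJ (n + k) x := by
  set B : ℝ := ((((n + 1) / 2 : ℕ)) : ℝ) + μ + 1 / 2 with hBdef
  have hB : 0 < B := by
    have : (0:ℝ) ≤ ((((n + 1) / 2 : ℕ)) : ℝ) := Nat.cast_nonneg _
    rw [hBdef]; linarith
  have hμB : μ ≤ B := by
    have : (0:ℝ) ≤ ((((n + 1) / 2 : ℕ)) : ℝ) := Nat.cast_nonneg _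
    rw [hBdef]; linarith
  set F : ℕ × ℕ → ℝ := fun p =>
    poch μ p.1 / ((p.1.factorial : ℝ) * poch B p.1) *
      ((-1 : ℝ) ^ p.2 / ((p.2.factorial : ℝ) * ((p.2 + (n + p.1)).factorial : ℝ))) *
      (x / 2) ^ (p.1 + (2 * p.2 + (n + p.1))) with hFdef
  -- Step A : each summand is an inner tsum
  have hA : ∀ k : ℕ, poch μ k / ((Nat.factorial k : ℝ) * poch B k) * (x / 2) ^ k * besselJ (n + k) x
      = ∑' j : ℕ, F (k, j) := by
    intro k
    rw [besselJ, mul_assoc, ← tsum_mul_left, ← tsum_mul_left]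
    apply tsum_congr
    intro j
    simp only [hFdef]
    rw [pow_add]
    ring
  -- Step B : summability
  have hsum : Summable F := aux_summable μ B x hμ hB hμB n
  -- Step C : the coefficient identity
  have key : ∀ s : ℕ, ((Nat.factorial n : ℝ) / dFact μ n) * (∑ kl ∈ Finset.HasAntidiagonal.antidiagonal s, F kl)
      = (-1 : ℝ) ^ s * (Nat.factorial (2 * s + n)) /
          ((Nat.factorial s) * (Nat.factorial (s + n)) * dFact μ (2 * s + n)) *
        (x / 2) ^ (2 * s + n) := by
    intro s
    rw [Finset.Nat.sum_antidiagonal_eq_sum_range_succ_mk]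
    have step1 : ∀ k ∈ Finset.range (s + 1), F (k, s - k)
        = ((-1 : ℝ) ^ s / ((s.factorial : ℝ) * ((s + n).factorial : ℝ) * poch B s) *
            (x / 2) ^ (2 * s + n)) *
          ((-1 : ℝ) ^ k * (s.choose k) * poch μ k *
            poch (μ + ((((n+1)/2 : ℕ) : ℝ) + 1/2) + k) (s - k)) := by
      intro k hk
      have hks : k ≤ s := Nat.lt_succ_iff.mp (Finset.mem_range.mp hk)
      have e1 : s - k + (n + k) = s + n := by omega
      have e3 : poch B s = poch B k * poch (B + k) (s - k) := by
        have h4 := poch_add B k (s - k)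
        rwa [Nat.add_sub_cancel' hks] at h4
      have e4 : poch (B + (k:ℝ)) (s - k) = poch (μ + ((((n+1)/2 : ℕ) : ℝ) + 1/2) + k) (s - k) := by
        rw [hBdef]; ring_nf
      have e5 : ((s.choose k : ℕ) : ℝ) = (s.factorial : ℝ) / ((k.factorial : ℝ) * ((s-k).factorial : ℝ)) :=
        Nat.cast_choose ℝ hks
      have e6 : ((-1 : ℝ)) ^ s * (-1 : ℝ) ^ k = (-1 : ℝ) ^ (s - k) := by
        rw [← pow_add, (by omega : s + k = (s - k) + 2 * k), pow_add, pow_mul]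
        norm_num
      simp only [hFdef]
      rw [e1, (by omega : k + (2 * (s - k) + (n + k)) = 2 * s + n), e5, ← e4, e3, ← e6]
      have n1 : ((k.factorial : ℝ)) ≠ 0 := by positivity
      have n2 : (((s-k).factorial : ℝ)) ≠ 0 := by positivity
      have n3 : ((s.factorial : ℝ)) ≠ 0 := by positivity
      have n4 : (((s+n).factorial : ℝ)) ≠ 0 := by positivity
      have n5 : poch B k ≠ 0 := ne_of_gt (poch_pos hB k)
      have n6 : poch (B + k) (s - k) ≠ 0 := ne_of_gt (poch_pos (by positivity) (s - k))
      field_simp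
    rw [Finset.sum_congr rfl step1, ← Finset.mul_sum, vandermonde μ s ((((n+1)/2 : ℕ) : ℝ) + 1/2)]
    have hrat := dFact_ratio μ n s
    rw [← hBdef] at hrat
    have n7 : dFact μ n ≠ 0 := ne_of_gt (dFact_pos hμ n)
    have n8 : dFact μ (2*s+n) ≠ 0 := ne_of_gt (dFact_pos hμ (2*s+n))
    have n9 : poch B s ≠ 0 := ne_of_gt (poch_pos hB s)
    have n3 : ((s.factorial : ℝ)) ≠ 0 := by positivity
    have n4 : (((s+n).factorial : ℝ)) ≠ 0 := by positivity
    set P1 : ℝ := poch ((((n+1)/2 : ℕ) : ℝ) + 1/2) s with hP1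
    set P2 : ℝ := poch B s with hP2
    set D1 : ℝ := dFact μ n with hD1
    set D2 : ℝ := dFact μ (2*s+n) with hD2
    set X : ℝ := (x/2)^(2*s+n) with hX
    set S1 : ℝ := (s.factorial : ℝ) with hS1
    set S2 : ℝ := ((s+n).factorial : ℝ) with hS2
    set N1 : ℝ := (n.factorial : ℝ) with hN1
    set N2 : ℝ := ((2*s+n).factorial : ℝ) with hN2
    field_simp
    linear_combination (x ^ (s * 2) * x ^ n * (1 / 2) ^ (s * 2) * (1 / 2) ^ n) * hrat
  -- Step D : assemble
  calc Jmu μ n x = ∑' s : ℕ, ((Nat.factorial n : ℝ) / dFact μ n) *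
        (∑ kl ∈ Finset.HasAntidiagonal.antidiagonal s, F kl) := by
        rw [Jmu]; exact (tsum_congr key).symm
    _ = ((Nat.factorial n : ℝ) / dFact μ n) * ∑' s : ℕ, ∑ kl ∈ Finset.HasAntidiagonal.antidiagonal s, F kl :=
        tsum_mul_left
    _ = ((Nat.factorial n : ℝ) / dFact μ n) * ∑' p : ℕ × ℕ, F p := by
        rw [tsum_nat_prod_eq_antidiagonal hsum]
    _ = ((Nat.factorial n : ℝ) / dFact μ n) * ∑' k : ℕ, ∑' j : ℕ, F (k, j) := by
        rw [Summable.tsum_prod hsum]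
    _ = _ := by rw [tsum_congr hA]
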